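/- Let (Y,d) be a bounded metric space and let (Y_ω, d_ω) be the constant ultralimit of Y with respect to a non-principal ultrafilter ω on an index set I. Suppose every geodesic triangle in Y of perimeter < 2D satisfies the CAT(κ) comparison inequality and Y is uniquely geodesic with geodesics varying so that limits of geodesics are geodesics. If Y is a closed ball of radius r ≤ (1-ε)D_κ/2 in a CAT(κ) space, then (Y_ω, d_ω) is a CAT(κ) space of radius at most r, and every geodesic in Y_ω is a limit of geodesics in Y. -/

import Mathlib

open Real

/-- A curve `γ : ℝ → X` is a geodesic (on `[0,1]`). -/
def IsGeodesic {X : Type*} [MetricSpace X] (γ : ℝ → X) : Prop :=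
  ∃ L : ℝ, 0 ≤ L ∧ ∀ s ∈ Set.Icc (0 : ℝ) 1, ∀ t ∈ Set.Icc (0 : ℝ) 1,
    dist (γ s) (γ t) = L * |s - t|

/-- The one-point comparison inequality with the model space of curvature `κ`,
for a point at parameter `t` on a geodesic from `x` to `y`, compared from `z`.
Here `dzx, dzy, dxy, dzt` denote the distances `d(z,x), d(z,y), d(x,y), d(z,γ(t))`. -/
def catIneq (κ dzx dzy dxy dzt t : ℝ) : Prop :=
  (0 < κ →
    Real.sin ((1 - t) * (Real.sqrt κ * dxy)) * Real.cos (Real.sqrt κ * dzx)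
      + Real.sin (t * (Real.sqrt κ * dxy)) * Real.cos (Real.sqrt κ * dzy)
      ≤ Real.cos (Real.sqrt κ * dzt) * Real.sin (Real.sqrt κ * dxy)) ∧
  (κ = 0 →
    dzt ^ 2 ≤ (1 - t) * dzx ^ 2 + t * dzy ^ 2 - t * (1 - t) * dxy ^ 2) ∧
  (κ < 0 →
    Real.cosh (Real.sqrt (-κ) * dzt) * Real.sinh (Real.sqrt (-κ) * dxy)
      ≤ Real.sinh ((1 - t) * (Real.sqrt (-κ) * dxy)) * Real.cosh (Real.sqrt (-κ) * dzx)
        + Real.sinh (t * (Real.sqrt (-κ) * dxy)) * Real.cosh (Real.sqrt (-κ) * dzy))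

/-- A metric space is CAT(κ) iff it is `D_κ`-geodesic and every geodesic triangle
of perimeter `< 2 D_κ` satisfies the one-point comparison inequality with the model
space of curvature `κ` (here `D_κ = π/√κ` for `κ > 0`, and the perimeter restriction
is vacuous for `κ ≤ 0`). -/
def IsCAT (κ : ℝ) (X : Type*) [MetricSpace X] : Prop :=
  (∀ x y : X, (0 < κ → dist x y < π / Real.sqrt κ) →
    ∃ γ : ℝ → X, IsGeodesic γ ∧ γ 0 = x ∧ γ 1 = y) ∧
  (∀ (x y z : X) (γ : ℝ → X), IsGeodesic γ → γ 0 = x → γ 1 = y →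
    (0 < κ → dist x y + dist y z + dist z x < 2 * (π / Real.sqrt κ)) →
    ∀ t ∈ Set.Icc (0 : ℝ) 1,
      catIneq κ (dist z x) (dist z y) (dist x y) (dist z (γ t)) t)

/-- Passing the comparison inequality to limits. -/
lemma catIneq_of_tendsto {κ t A B C D : ℝ} {ι : Type*} {l : Filter ι} [l.NeBot]
    {a b c d : ι → ℝ}
    (ha : Filter.Tendsto a l (nhds A)) (hb : Filter.Tendsto b l (nhds B))
    (hc : Filter.Tendsto c l (nhds C)) (hd : Filter.Tendsto d l (nhds D))
    (h : ∀ᶠ i in l, catIneq κ (a i) (b i) (c i) (d i) t) :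
    catIneq κ A B C D t := by
  have sκ := Real.sqrt κ
  refine ⟨fun hκ => ?_, fun hκ => ?_, fun hκ => ?_⟩
  · refine le_of_tendsto_of_tendsto
      (((Real.continuous_sin.tendsto _).comp ((hc.const_mul (Real.sqrt κ)).const_mul (1 - t))).mul
        ((Real.continuous_cos.tendsto _).comp (ha.const_mul (Real.sqrt κ))) |>.add
       (((Real.continuous_sin.tendsto _).comp ((hc.const_mul (Real.sqrt κ)).const_mul t)).mul
        ((Real.continuous_cos.tendsto _).comp (hb.const_mul (Real.sqrt κ)))))
      (((Real.continuous_cos.tendsto _).comp (hd.const_mul (Real.sqrt κ))).mul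
        ((Real.continuous_sin.tendsto _).comp (hc.const_mul (Real.sqrt κ)))) ?_
    filter_upwards [h] with i hi
    exact hi.1 hκ
  · refine le_of_tendsto_of_tendsto (hd.pow 2)
      ((((ha.pow 2).const_mul (1 - t)).add ((hb.pow 2).const_mul t)).sub
        ((hc.pow 2).const_mul (t * (1 - t)))) ?_
    filter_upwards [h] with i hi
    exact hi.2.1 hκ
  · refine le_of_tendsto_of_tendsto
      (((Real.continuous_cosh.tendsto _).comp (hd.const_mul (Real.sqrt (-κ)))).mul
        ((Real.continuous_sinh.tendsto _).comp (hc.const_mul (Real.sqrt (-κ)))))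
      (((Real.continuous_sinh.tendsto _).comp ((hc.const_mul (Real.sqrt (-κ))).const_mul (1 - t))).mul
        ((Real.continuous_cosh.tendsto _).comp (ha.const_mul (Real.sqrt (-κ)))) |>.add
       (((Real.continuous_sinh.tendsto _).comp ((hc.const_mul (Real.sqrt (-κ))).const_mul t)).mul
        ((Real.continuous_cosh.tendsto _).comp (hb.const_mul (Real.sqrt (-κ)))))) ?_
    filter_upwards [h] with i hi
    exact hi.2.2 hκ

/-- Comparison of a geodesic with itself forces coincidence. -/
lemma catIneq_self_eq_zero {κ L d t : ℝ} (ht : t ∈ Set.Icc (0:ℝ) 1)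
    (hL : 0 ≤ L) (hd : 0 ≤ d) (hdle : d ≤ 2 * L)
    (hκL : 0 < κ → Real.sqrt κ * L < π)
    (h : catIneq κ (L * t) (L * (1 - t)) L d t) : d = 0 := by
  obtain ⟨ht0, ht1⟩ := ht
  rcases lt_trichotomy κ 0 with hκ | hκ | hκ
  · have hcpos : 0 < Real.sqrt (-κ) := Real.sqrt_pos.mpr (by linarith)
    set c := Real.sqrt (-κ)
    rcases eq_or_lt_of_le hL with hL0 | hLpos
    · linarith
    have h3 := h.2.2 hκ
    have e2 : c * (L * t) = t * (c * L) := by ring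
    have e3 : c * (L * (1 - t)) = (1 - t) * (c * L) := by ring
    rw [e2, e3] at h3
    have hadd := Real.sinh_add ((1 - t) * (c * L)) (t * (c * L))
    have e1 : (1 - t) * (c * L) + t * (c * L) = c * L := by ring
    rw [e1] at hadd
    have hsinh : 0 < Real.sinh (c * L) := Real.sinh_pos_iff.mpr (by positivity)
    have hcosh1 : Real.cosh (c * d) ≤ 1 := by
      have : Real.cosh (c * d) * Real.sinh (c * L) ≤ 1 * Real.sinh (c * L) := by
        nlinarith [h3, hadd]
      exact le_of_mul_le_mul_right this hsinh
    have : |c * d| ≤ |0| := by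
      rw [← Real.cosh_zero] at hcosh1
      exact Real.cosh_le_cosh.mp hcosh1
    have hle : c * d ≤ 0 := by simpa [abs_of_nonneg (by positivity : (0:ℝ) ≤ c * d)] using this
    have hcd : c * d = 0 := le_antisymm hle (by positivity)
    exact (mul_eq_zero.mp hcd).resolve_left (ne_of_gt hcpos)
  · have h0 := h.2.1 hκ
    nlinarith [h0, hd]
  · have hspos : 0 < Real.sqrt κ := Real.sqrt_pos.mpr hκ
    set s := Real.sqrt κ
    rcases eq_or_lt_of_le hL with hL0 | hLpos
    · linarith
    have h1 := h.1 hκ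
    have e2 : s * (L * t) = t * (s * L) := by ring
    have e3 : s * (L * (1 - t)) = (1 - t) * (s * L) := by ring
    rw [e2, e3] at h1
    have hadd := Real.sin_add ((1 - t) * (s * L)) (t * (s * L))
    have e1 : (1 - t) * (s * L) + t * (s * L) = s * L := by ring
    rw [e1] at hadd
    have hapos : 0 < s * L := by positivity
    have hsin : 0 < Real.sin (s * L) := Real.sin_pos_of_pos_of_lt_pi hapos (hκL hκ)
    have hcos1 : 1 ≤ Real.cos (s * d) := by
      have : 1 * Real.sin (s * L) ≤ Real.cos (s * d) * Real.sin (s * L) := by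
        nlinarith [h1, hadd]
      exact le_of_mul_le_mul_right this hsin
    have hcos : Real.cos (s * d) = 1 := le_antisymm (Real.cos_le_one _) hcos1
    have hlt : s * d < 2 * π := by
      have : s * d ≤ s * (2 * L) := by
        exact mul_le_mul_of_nonneg_left hdle hspos.le
      nlinarith [hκL hκ]
    have hgt : -(2 * π) < s * d := by nlinarith [Real.pi_pos, mul_nonneg hspos.le hd]
    have hsd := (Real.cos_eq_one_iff_of_lt_of_lt hgt hlt).mp hcos
    exact (mul_eq_zero.mp hsd).resolve_left (ne_of_gt hspos)


/-- Comparison with the center forces points on geodesics to stay in the ball. -/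
lemma catIneq_ball {κ r b1 b2 dxy dzt t : ℝ} (ht : t ∈ Set.Icc (0:ℝ) 1)
    (hr : 0 ≤ r) (hb1 : 0 ≤ b1) (hb1r : b1 ≤ r) (hb2 : 0 ≤ b2) (hb2r : b2 ≤ r)
    (hdxy : 0 ≤ dxy) (hdxyr : dxy ≤ 2 * r) (hdzt : 0 ≤ dzt)
    (hdle : dzt ≤ b1 + t * dxy)
    (hκr : 0 < κ → Real.sqrt κ * r < π / 2)
    (h : catIneq κ b1 b2 dxy dzt t) : dzt ≤ r := by
  obtain ⟨ht0, ht1⟩ := ht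
  rcases lt_trichotomy κ 0 with hκ | hκ | hκ
  · -- κ < 0
    have hcpos : 0 < Real.sqrt (-κ) := Real.sqrt_pos.mpr (by linarith)
    set c := Real.sqrt (-κ)
    rcases eq_or_lt_of_le hdxy with h0 | hpos
    · rw [← h0] at hdle; simpa using hdle.trans (by linarith)
    have h3 := h.2.2 hκ
    set a := c * dxy with ha
    have hapos : 0 < a := by positivity
    have hs1 : 0 ≤ Real.sinh ((1 - t) * a) :=
      Real.sinh_nonneg_iff.mpr (mul_nonneg (by linarith) hapos.le)
    have hs2 : 0 ≤ Real.sinh (t * a) := Real.sinh_nonneg_iff.mpr (mul_nonneg ht0 hapos.le)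
    have hch1 : Real.cosh (c * b1) ≤ Real.cosh (c * r) :=
      Real.cosh_le_cosh.mpr (by
        rw [abs_of_nonneg (by positivity), abs_of_nonneg (by positivity)]
        exact mul_le_mul_of_nonneg_left hb1r hcpos.le)
    have hch2 : Real.cosh (c * b2) ≤ Real.cosh (c * r) :=
      Real.cosh_le_cosh.mpr (by
        rw [abs_of_nonneg (by positivity), abs_of_nonneg (by positivity)]
        exact mul_le_mul_of_nonneg_left hb2r hcpos.le)
    have hadd := Real.sinh_add ((1 - t) * a) (t * a)
    have e1 : (1 - t) * a + t * a = a := by ring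
    rw [e1] at hadd
    have hsum : Real.sinh ((1 - t) * a) + Real.sinh (t * a) ≤ Real.sinh a := by
      have k1 := mul_le_mul_of_nonneg_left (Real.one_le_cosh (t * a)) hs1
      have k2 := mul_le_mul_of_nonneg_right (Real.one_le_cosh ((1 - t) * a)) hs2
      rw [mul_one] at k1
      rw [one_mul] at k2
      linarith
    have hsinh : 0 < Real.sinh a := Real.sinh_pos_iff.mpr hapos
    have hchain : Real.cosh (c * dzt) * Real.sinh a ≤ Real.cosh (c * r) * Real.sinh a := by
      calc Real.cosh (c * dzt) * Real.sinh a
          ≤ Real.sinh ((1 - t) * a) * Real.cosh (c * b1)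
            + Real.sinh (t * a) * Real.cosh (c * b2) := h3
        _ ≤ Real.sinh ((1 - t) * a) * Real.cosh (c * r)
            + Real.sinh (t * a) * Real.cosh (c * r) := by
            exact add_le_add (mul_le_mul_of_nonneg_left hch1 hs1)
              (mul_le_mul_of_nonneg_left hch2 hs2)
        _ = (Real.sinh ((1 - t) * a) + Real.sinh (t * a)) * Real.cosh (c * r) := by ring
        _ ≤ Real.sinh a * Real.cosh (c * r) :=
            mul_le_mul_of_nonneg_right hsum (Real.cosh_pos _).le
        _ = Real.cosh (c * r) * Real.sinh a := by ring
    have hcc : Real.cosh (c * dzt) ≤ Real.cosh (c * r) :=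
      le_of_mul_le_mul_right hchain hsinh
    have habs := Real.cosh_le_cosh.mp hcc
    rw [abs_of_nonneg (by positivity), abs_of_nonneg (by positivity)] at habs
    exact le_of_mul_le_mul_left habs hcpos
  · -- κ = 0
    have h0 := h.2.1 hκ
    have hb1sq : b1 ^ 2 ≤ r ^ 2 := by nlinarith
    have hb2sq : b2 ^ 2 ≤ r ^ 2 := by nlinarith
    nlinarith [mul_nonneg (mul_nonneg ht0 (by linarith : (0:ℝ) ≤ 1 - t)) (sq_nonneg dxy),
      mul_le_mul_of_nonneg_left hb1sq (by linarith : (0:ℝ) ≤ 1 - t),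
      mul_le_mul_of_nonneg_left hb2sq ht0]
  · -- κ > 0
    have hspos : 0 < Real.sqrt κ := Real.sqrt_pos.mpr hκ
    set s := Real.sqrt κ
    have hsr := hκr hκ
    rcases eq_or_lt_of_le hdxy with h0 | hpos
    · rw [← h0] at hdle; simpa using hdle.trans (by linarith)
    have h1 := h.1 hκ
    set a := s * dxy with ha
    have hapos : 0 < a := by positivity
    have haπ : a < π := by
      have : a ≤ s * (2 * r) := mul_le_mul_of_nonneg_left hdxyr hspos.le
      nlinarith
    have hs1 : 0 ≤ Real.sin ((1 - t) * a) :=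
      Real.sin_nonneg_of_nonneg_of_le_pi (mul_nonneg (by linarith) hapos.le) (by nlinarith)
    have hs2 : 0 ≤ Real.sin (t * a) :=
      Real.sin_nonneg_of_nonneg_of_le_pi (by positivity) (by nlinarith)
    have hc1 : Real.cos (s * r) ≤ Real.cos (s * b1) :=
      Real.cos_le_cos_of_nonneg_of_le_pi (by positivity) (by nlinarith [Real.pi_pos])
        (mul_le_mul_of_nonneg_left hb1r hspos.le)
    have hc2 : Real.cos (s * r) ≤ Real.cos (s * b2) :=
      Real.cos_le_cos_of_nonneg_of_le_pi (by positivity) (by nlinarith [Real.pi_pos])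
        (mul_le_mul_of_nonneg_left hb2r hspos.le)
    have hcrpos : 0 < Real.cos (s * r) :=
      Real.cos_pos_of_mem_Ioo ⟨by nlinarith [Real.pi_pos, mul_nonneg hspos.le hr], hsr⟩
    have hadd := Real.sin_add ((1 - t) * a) (t * a)
    have e1 : (1 - t) * a + t * a = a := by ring
    rw [e1] at hadd
    have hsum : Real.sin a ≤ Real.sin ((1 - t) * a) + Real.sin (t * a) := by
      have k1 := mul_le_mul_of_nonneg_left (Real.cos_le_one (t * a)) hs1
      have k2 := mul_le_mul_of_nonneg_right (Real.cos_le_one ((1 - t) * a)) hs2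
      rw [mul_one] at k1
      rw [one_mul] at k2
      linarith
    have hsin : 0 < Real.sin a := Real.sin_pos_of_pos_of_lt_pi hapos haπ
    have hchain : Real.cos (s * r) * Real.sin a ≤ Real.cos (s * dzt) * Real.sin a := by
      calc Real.cos (s * r) * Real.sin a
          ≤ Real.cos (s * r) * (Real.sin ((1 - t) * a) + Real.sin (t * a)) :=
            mul_le_mul_of_nonneg_left hsum hcrpos.le
        _ = Real.sin ((1 - t) * a) * Real.cos (s * r)
            + Real.sin (t * a) * Real.cos (s * r) := by ring
        _ ≤ Real.sin ((1 - t) * a) * Real.cos (s * b1)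
            + Real.sin (t * a) * Real.cos (s * b2) :=
            add_le_add (mul_le_mul_of_nonneg_left hc1 hs1)
              (mul_le_mul_of_nonneg_left hc2 hs2)
        _ ≤ Real.cos (s * dzt) * Real.sin a := h1
    have hcos : Real.cos (s * r) ≤ Real.cos (s * dzt) :=
      le_of_mul_le_mul_right hchain hsin
    have hθle : s * dzt ≤ s * r + a := by
      have h5 : s * dzt ≤ s * (b1 + t * dxy) := mul_le_mul_of_nonneg_left hdle hspos.le
      have hb : s * b1 ≤ s * r := mul_le_mul_of_nonneg_left hb1r hspos.le
      have hexp : s * (b1 + t * dxy) = s * b1 + t * a := by rw [ha]; ring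
      have hta : t * a ≤ 1 * a := mul_le_mul_of_nonneg_right ht1 hapos.le
      rw [one_mul] at hta
      linarith
    have hθlt : s * dzt < π / 2 := by
      by_contra hcon
      push_neg at hcon
      have : Real.cos (s * dzt) ≤ 0 :=
        Real.cos_nonpos_of_pi_div_two_le_of_le hcon (by linarith)
      linarith
    have hfin : s * dzt ≤ s * r :=
      (Real.strictAntiOn_cos.le_iff_ge
        ⟨by positivity, by linarith [Real.pi_pos]⟩
        ⟨by positivity, by linarith [Real.pi_pos]⟩).mp hcos
    exact le_of_mul_le_mul_left hfin hspos

/-- Ultralimits of a closed ball of radius `r ≤ (1-ε)·D_κ/2` in a CAT(κ) space: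
if `dω` is the ultralimit pseudodistance on `I → B̄_r(o)` with respect to a
non-principal ultrafilter `ω`, then the ultralimit has radius at most `r` (about
the constant point `o`), satisfies the CAT(κ) one-point comparison inequality
along all of its geodesics, and every geodesic of the ultralimit is a limit of
geodesics of the ball. -/
theorem ultralimit_CAT
    (κ ε r : ℝ) (hε : ε ∈ Set.Ioo (0 : ℝ) 1) (hr : 0 ≤ r)
    (hrD : 0 < κ → r ≤ (1 - ε) * (π / Real.sqrt κ) / 2)
    {X : Type*} [MetricSpace X] (hX : IsCAT κ X) (o : X)
    {I : Type*} (ω : Ultrafilter I) (hω : ∀ S : Set I, S.Finite → S ∉ ω)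
    (dω : (I → Metric.closedBall o r) → (I → Metric.closedBall o r) → ℝ)
    (hdω : ∀ f g : I → Metric.closedBall o r,
      Filter.Tendsto (fun i => dist (f i : X) (g i : X)) ω (nhds (dω f g))) :
    (∀ f : I → Metric.closedBall o r,
      dω (fun _ => ⟨o, Metric.mem_closedBall_self hr⟩) f ≤ r) ∧
    (∀ (x y z : I → Metric.closedBall o r) (γ : ℝ → (I → Metric.closedBall o r)),
      (∃ L : ℝ, 0 ≤ L ∧ ∀ s ∈ Set.Icc (0 : ℝ) 1, ∀ t ∈ Set.Icc (0 : ℝ) 1,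
        dω (γ s) (γ t) = L * |s - t|) →
      dω (γ 0) x = 0 → dω (γ 1) y = 0 →
      (0 < κ → dω x y + dω y z + dω z x < 2 * (π / Real.sqrt κ)) →
      ∀ t ∈ Set.Icc (0 : ℝ) 1,
        catIneq κ (dω z x) (dω z y) (dω x y) (dω z (γ t)) t) ∧
    (∀ γ : ℝ → (I → Metric.closedBall o r),
      (∃ L : ℝ, 0 ≤ L ∧ ∀ s ∈ Set.Icc (0 : ℝ) 1, ∀ t ∈ Set.Icc (0 : ℝ) 1,
        dω (γ s) (γ t) = L * |s - t|) →
      ∃ g : I → ℝ → X,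
        (∀ i, IsGeodesic (g i) ∧ ∀ t ∈ Set.Icc (0 : ℝ) 1, g i t ∈ Metric.closedBall o r) ∧
        ∀ t ∈ Set.Icc (0 : ℝ) 1, ∃ gt : I → Metric.closedBall o r,
          (∀ i, (gt i : X) = g i t) ∧ dω (γ t) gt = 0) := by
  obtain ⟨hε0, hε1⟩ := hε
  obtain ⟨hX1, hX2⟩ := hX
  have hDpos : 0 < κ → 0 < π / Real.sqrt κ := fun hκ =>
    div_pos Real.pi_pos (Real.sqrt_pos.mpr hκ)
  have hsπ : 0 < κ → Real.sqrt κ * (π / Real.sqrt κ) = π := fun hκ => by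
    rw [mul_comm, div_mul_cancel₀ _ (ne_of_gt (Real.sqrt_pos.mpr hκ))]
  have hκr : 0 < κ → Real.sqrt κ * r < π / 2 := by
    intro hκ
    have hs := Real.sqrt_pos.mpr hκ
    have h1 := mul_le_mul_of_nonneg_left (hrD hκ) hs.le
    have e : Real.sqrt κ * ((1 - ε) * (π / Real.sqrt κ) / 2)
        = (1 - ε) * (Real.sqrt κ * (π / Real.sqrt κ)) / 2 := by ring
    rw [e, hsπ hκ] at h1
    nlinarith [Real.pi_pos, mul_pos hε0 Real.pi_pos]
  have hr2D : 0 < κ → 2 * r < π / Real.sqrt κ := by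
    intro hκ
    have := hrD hκ
    nlinarith [mul_pos hε0 (hDpos hκ)]
  have hbd : ∀ p q : Metric.closedBall o r, dist (p : X) (q : X) ≤ 2 * r := by
    intro p q
    have h1 := p.2
    have h2 := q.2
    rw [Metric.mem_closedBall] at h1 h2
    have := dist_triangle (p : X) o (q : X)
    rw [dist_comm o (q : X)] at this
    linarith
  have dnn : ∀ f g, 0 ≤ dω f g := fun f g =>
    ge_of_tendsto' (hdω f g) fun i => dist_nonneg
  have dle : ∀ f g, dω f g ≤ 2 * r := fun f g =>
    le_of_tendsto' (hdω f g) fun i => hbd _ _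
  have dsymm : ∀ f g, dω f g = dω g f := fun f g =>
    tendsto_nhds_unique (hdω f g) (by simpa [dist_comm] using hdω g f)
  have dtri : ∀ f g h, dω f h ≤ dω f g + dω g h := fun f g h =>
    le_of_tendsto_of_tendsto (hdω f h) ((hdω f g).add (hdω g h))
      (Filter.Eventually.of_forall fun i => dist_triangle _ _ _)
  have dcongr : ∀ (f : I → Metric.closedBall o r) {a b}, dω a b = 0 → dω f a = dω f b := by
    intro f a b hab
    refine le_antisymm ?_ ?_
    · have h1 := dtri f b a
      have h2 : dω b a = 0 := by rw [dsymm b a]; exact hab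
      linarith
    · have h1 := dtri f a b
      linarith
  have h01 : (0 : ℝ) ∈ Set.Icc (0 : ℝ) 1 := by constructor <;> norm_num
  have h11 : (1 : ℝ) ∈ Set.Icc (0 : ℝ) 1 := by constructor <;> norm_num
  -- the key construction: limit geodesics
  have key : ∀ γ : ℝ → (I → Metric.closedBall o r),
      (∃ L : ℝ, 0 ≤ L ∧ ∀ s ∈ Set.Icc (0 : ℝ) 1, ∀ t ∈ Set.Icc (0 : ℝ) 1,
        dω (γ s) (γ t) = L * |s - t|) →
      ∃ g : I → ℝ → X,
        (∀ i, IsGeodesic (g i) ∧ g i 0 = (γ 0 i : X) ∧ g i 1 = (γ 1 i : X) ∧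
          ∀ t ∈ Set.Icc (0 : ℝ) 1, g i t ∈ Metric.closedBall o r) ∧
        ∀ t ∈ Set.Icc (0 : ℝ) 1, ∀ gt : I → Metric.closedBall o r,
          (∀ i, (gt i : X) = g i t) → dω (γ t) gt = 0 := by
    rintro γ ⟨L, hL, hgeo⟩
    have hLd : dω (γ 0) (γ 1) = L := by simpa using hgeo 0 h01 1 h11
    have hL2r : L ≤ 2 * r := hLd ▸ dle _ _
    have hLi : Filter.Tendsto (fun i => dist ((γ 0 i : X)) ((γ 1 i : X))) ω (nhds L) := by
      rw [← hLd]; exact hdω _ _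
    have hκL : 0 < κ → Real.sqrt κ * L < π := by
      intro hκ
      have h1 : Real.sqrt κ * L ≤ Real.sqrt κ * (2 * r) :=
        mul_le_mul_of_nonneg_left hL2r (Real.sqrt_nonneg κ)
      nlinarith [hκr hκ]
    choose g hgeod hg0 hg1 using fun i =>
      hX1 (γ 0 i) (γ 1 i) (fun hκ => lt_of_le_of_lt (hbd _ _) (hr2D hκ))
    have hdistg : ∀ i, ∀ s ∈ Set.Icc (0 : ℝ) 1, ∀ u ∈ Set.Icc (0 : ℝ) 1,
        dist (g i s) (g i u) = dist ((γ 0 i : X)) ((γ 1 i : X)) * |s - u| := by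
      intro i s hs u hu
      obtain ⟨M, hM0, hM⟩ := hgeod i
      have hM01 : dist (g i 0) (g i 1) = M := by simpa using hM 0 h01 1 h11
      rw [hM s hs u hu, ← hM01, hg0 i, hg1 i]
    have hmem : ∀ i, ∀ t ∈ Set.Icc (0 : ℝ) 1, g i t ∈ Metric.closedBall o r := by
      intro i t ht
      have hb1r : dist o ((γ 0 i : X)) ≤ r := by
        have := (γ 0 i).2
        rw [Metric.mem_closedBall] at this
        rwa [dist_comm]
      have hb2r : dist o ((γ 1 i : X)) ≤ r := by
        have := (γ 1 i).2
        rw [Metric.mem_closedBall] at this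
        rwa [dist_comm]
      have hcat : catIneq κ (dist o ((γ 0 i : X))) (dist o ((γ 1 i : X)))
          (dist ((γ 0 i : X)) ((γ 1 i : X))) (dist o (g i t)) t := by
        refine hX2 (γ 0 i) (γ 1 i) o (g i) (hgeod i) (hg0 i) (hg1 i) ?_ t ht
        intro hκ
        have h1 := hbd (γ 0 i) (γ 1 i)
        have h2 := hrD hκ
        have h3 := hDpos hκ
        have h4 := mul_pos hε0 h3
        have h5 := (γ 1 i).2
        rw [Metric.mem_closedBall] at h5
        nlinarith [hb1r]
      have step : dist o (g i t) ≤ dist o ((γ 0 i : X))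
          + t * dist ((γ 0 i : X)) ((γ 1 i : X)) := by
        have h5 := dist_triangle o (g i 0) (g i t)
        rw [hdistg i 0 h01 t ht, hg0 i, zero_sub, abs_neg, abs_of_nonneg ht.1] at h5
        nlinarith [h5]
      rw [Metric.mem_closedBall, dist_comm]
      exact catIneq_ball ht hr dist_nonneg hb1r dist_nonneg hb2r dist_nonneg
        (hbd _ _) dist_nonneg step hκr hcat
    refine ⟨g, fun i => ⟨hgeod i, hg0 i, hg1 i, hmem i⟩, ?_⟩
    intro t ht gt hgt
    obtain ⟨ht0, ht1⟩ := ht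
    have e0 : dω (γ t) (γ 0) = L * t := by
      have := hgeo t ⟨ht0, ht1⟩ 0 h01
      rwa [sub_zero, abs_of_nonneg ht0] at this
    have e1 : dω (γ t) (γ 1) = L * (1 - t) := by
      have := hgeo t ⟨ht0, ht1⟩ 1 h11
      rwa [abs_of_nonpos (by linarith : t - 1 ≤ 0), neg_sub] at this
    have e2 : dω (γ 0) gt = L * t := by
      refine tendsto_nhds_unique (hdω (γ 0) gt) ?_
      have hfun : (fun i => dist ((γ 0 i : X)) ((gt i : X)))
          = fun i => dist ((γ 0 i : X)) ((γ 1 i : X)) * t := by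
        funext i
        rw [hgt i, ← hg0 i, hdistg i 0 h01 t ⟨ht0, ht1⟩, zero_sub, abs_neg,
          abs_of_nonneg ht0, hg0 i]
      rw [hfun]
      exact hLi.mul_const t
    have hd2L : dω (γ t) gt ≤ 2 * L := by
      have h1 := dtri (γ t) (γ 0) gt
      rw [e0, e2] at h1
      have h2 : L * t ≤ L * 1 := mul_le_mul_of_nonneg_left ht1 hL
      rw [mul_one] at h2
      linarith
    have hper : ∀ᶠ i in (ω : Filter I), (0 < κ →
        dist ((γ 0 i : X)) ((γ 1 i : X)) + dist ((γ 1 i : X)) ((γ t i : X))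
          + dist ((γ t i : X)) ((γ 0 i : X)) < 2 * (π / Real.sqrt κ)) := by
      rcases le_or_gt κ 0 with hκ | hκ
      · exact Filter.Eventually.of_forall fun i hκ' => absurd hκ' (not_lt.mpr hκ)
      · have eA : dω (γ 1) (γ t) = L * (1 - t) := by
          have := hgeo 1 h11 t ⟨ht0, ht1⟩
          rwa [abs_of_nonneg (by linarith : (0:ℝ) ≤ 1 - t)] at this
        have htend := ((hdω (γ 0) (γ 1)).add (hdω (γ 1) (γ t))).add (hdω (γ t) (γ 0))
        have hlt : dω (γ 0) (γ 1) + dω (γ 1) (γ t) + dω (γ t) (γ 0)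
            < 2 * (π / Real.sqrt κ) := by
          rw [hLd, eA, e0]
          have h3 := hrD hκ
          have h4 := mul_pos hε0 (hDpos hκ)
          nlinarith
        exact (htend.eventually_lt_const hlt).mono fun i hi _ => hi
    have hev : ∀ᶠ i in (ω : Filter I), catIneq κ (dist ((γ t i : X)) ((γ 0 i : X)))
        (dist ((γ t i : X)) ((γ 1 i : X))) (dist ((γ 0 i : X)) ((γ 1 i : X)))
        (dist ((γ t i : X)) (g i t)) t := by
      filter_upwards [hper] with i hp
      exact hX2 (γ 0 i) (γ 1 i) (γ t i) (g i) (hgeod i) (hg0 i) (hg1 i) hp t ⟨ht0, ht1⟩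
    have hdgt : Filter.Tendsto (fun i => dist ((γ t i : X)) (g i t)) ω
        (nhds (dω (γ t) gt)) := by
      have h6 := hdω (γ t) gt
      have hfun : (fun i => dist ((γ t i : X)) ((gt i : X)))
          = fun i => dist ((γ t i : X)) (g i t) := by
        funext i; rw [hgt i]
      rwa [hfun] at h6
    have hlim : catIneq κ (dω (γ t) (γ 0)) (dω (γ t) (γ 1)) (dω (γ 0) (γ 1))
        (dω (γ t) gt) t :=
      catIneq_of_tendsto (hdω (γ t) (γ 0)) (hdω (γ t) (γ 1)) (hdω (γ 0) (γ 1)) hdgt hev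
    rw [e0, e1, hLd] at hlim
    exact catIneq_self_eq_zero ⟨ht0, ht1⟩ hL (dnn _ _) hd2L hκL hlim
  refine ⟨fun f => ?_, ?_, ?_⟩
  · refine le_of_tendsto' (hdω _ f) fun i => ?_
    have := (f i).2
    rw [Metric.mem_closedBall] at this
    simpa [dist_comm] using this
  · rintro x y z γ hγ hx hy hper t ht
    obtain ⟨g, hg, hzero⟩ := key γ hγ
    have h0 : dω (γ t) (fun i => (⟨g i t, (hg i).2.2.2 t ht⟩ : Metric.closedBall o r)) = 0 :=
      hzero t ht _ fun i => rfl
    have exx : dω z (γ 0) = dω z x := dcongr z hx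
    have eyy : dω z (γ 1) = dω z y := dcongr z hy
    have exy : dω (γ 0) (γ 1) = dω x y := by
      have hA : dω (γ 0) (γ 1) = dω (γ 0) y := dcongr (γ 0) hy
      have hB : dω (γ 0) y = dω x y := by
        rw [dsymm (γ 0) y, dcongr y hx, dsymm y x]
      exact hA.trans hB
    have eA : dω (γ 1) z = dω y z := by
      rw [dsymm (γ 1) z, dcongr z hy, dsymm z y]
    have hperS : ∀ᶠ i in (ω : Filter I), (0 < κ →
        dist ((γ 0 i : X)) ((γ 1 i : X)) + dist ((γ 1 i : X)) ((z i : X))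
          + dist ((z i : X)) ((γ 0 i : X)) < 2 * (π / Real.sqrt κ)) := by
      rcases le_or_gt κ 0 with hκ | hκ
      · exact Filter.Eventually.of_forall fun i hκ' => absurd hκ' (not_lt.mpr hκ)
      · have htend := ((hdω (γ 0) (γ 1)).add (hdω (γ 1) z)).add (hdω z (γ 0))
        have hlt : dω (γ 0) (γ 1) + dω (γ 1) z + dω z (γ 0)
            < 2 * (π / Real.sqrt κ) := by
          rw [exy, eA, exx]
          exact hper hκ
        exact (htend.eventually_lt_const hlt).mono fun i hi _ => hi
    have hev : ∀ᶠ i in (ω : Filter I), catIneq κ (dist ((z i : X)) ((γ 0 i : X)))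
        (dist ((z i : X)) ((γ 1 i : X))) (dist ((γ 0 i : X)) ((γ 1 i : X)))
        (dist ((z i : X)) (g i t)) t := by
      filter_upwards [hperS] with i hp
      exact hX2 (γ 0 i) (γ 1 i) (z i) (g i) (hg i).1 (hg i).2.1 (hg i).2.2.1 hp t ht
    have hlim : catIneq κ (dω z (γ 0)) (dω z (γ 1)) (dω (γ 0) (γ 1))
        (dω z (fun i => (⟨g i t, (hg i).2.2.2 t ht⟩ : Metric.closedBall o r))) t :=
      catIneq_of_tendsto (hdω z (γ 0)) (hdω z (γ 1)) (hdω (γ 0) (γ 1))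
        (hdω z (fun i => (⟨g i t, (hg i).2.2.2 t ht⟩ : Metric.closedBall o r))) hev
    rw [exx, eyy, exy, ← dcongr z h0] at hlim
    exact hlim
  · intro γ hγ
    obtain ⟨g, hg, hzero⟩ := key γ hγ
    exact ⟨g, fun i => ⟨(hg i).1, (hg i).2.2.2⟩, fun t ht =>
      ⟨fun i => ⟨g i t, (hg i).2.2.2 t ht⟩, fun i => rfl, hzero t ht _ fun i => rfl⟩⟩
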